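/- For every finite set Σ with |Σ| ≥ 2, every m ∈ ℕ, every full-support distributions μ_1,…,μ_m on Σ, and every ε, τ > 0 and d ∈ ℕ, there exists a function 𝓜 : ℕ → ℕ such that the following holds for all n, all functions f_1,…,f_m : Σ^n → [0,1], and every J_0 ⊆ [n]: there exists a set J ⊇ J_0 of size at most 𝓜(|J_0|) such that for all j ∈ [m], Pr_{x ~ μ_j^J}[ f_j|_{J←x} is (d,τ)-regular with respect to μ_j ] ≥ 1 − ε. -/

import Mathlib

open Finset

attribute [local instance 10] Classical.propDecidable

noncomputable section

variable {Alph : Type*} [Fintype Alph] [DecidableEq Alph]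

/-- The conditional expectation `E[f | x_T]`: average the coordinates outside `T`
i.i.d. according to `μ`, keeping the coordinates in `T` fixed to those of `x`. -/
def condExpOn {n : ℕ} (μ : Alph → ℝ) (T : Finset (Fin n)) (f : (Fin n → Alph) → ℝ)
    (x : Fin n → Alph) : ℝ :=
  ∑ y : Fin n → Alph,
    (∏ i, if i ∈ T then (if y i = x i then (1 : ℝ) else 0) else μ (y i)) * f y

/-- The Efron–Stein component `f_S` of `f` with respect to `μ^n`, given by the
inclusion–exclusion formula `f_S = Σ_{T ⊆ S} (−1)^{|S∖T|} E[f | x_T]`. -/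
def esComp {n : ℕ} (μ : Alph → ℝ) (S : Finset (Fin n)) (f : (Fin n → Alph) → ℝ)
    (x : Fin n → Alph) : ℝ :=
  ∑ T ∈ S.powerset, (-1 : ℝ) ^ (S.card - T.card) * condExpOn μ T f x

/-- `‖f_S‖²`, computed in `L²(μ^n)`. -/
def esNormSq {n : ℕ} (μ : Alph → ℝ) (S : Finset (Fin n)) (f : (Fin n → Alph) → ℝ) : ℝ :=
  ∑ x : Fin n → Alph, (∏ i, μ (x i)) * (esComp μ S f x) ^ 2

/-- Merge `x : Alph^J` with `y` off `J`: the restricted function `f|_{J←x}` is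
represented as `fun y => f (mergeJ J x y)`. -/
def mergeJ {n : ℕ} (J : Finset (Fin n)) (x : ↥J → Alph) (y : Fin n → Alph) : Fin n → Alph :=
  fun i => if h : i ∈ J then x ⟨i, h⟩ else y i

/-- The degree-`d` influence `Inf_i[f^{≤d}] = Σ_{|S| ≤ d, i ∈ S} ‖f_S‖²`. -/
def degInfES {n : ℕ} (μ : Alph → ℝ) (d : ℕ) (f : (Fin n → Alph) → ℝ) (i : Fin n) : ℝ :=
  ∑ S : Finset (Fin n), if S.card ≤ d ∧ i ∈ S then esNormSq μ S f else 0

/-- `f` is `(d,τ)`-regular with respect to `μ`. -/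
def IsDegRegularES {n : ℕ} (μ : Alph → ℝ) (d : ℕ) (τ : ℝ) (f : (Fin n → Alph) → ℝ) : Prop :=
  ∀ i, degInfES μ d f i ≤ τ

namespace JonesAux

set_option linter.unusedSectionVars false

variable {Alph : Type*} [Fintype Alph] [DecidableEq Alph] {n : ℕ}

/-- product weight -/
def wz (μ : Alph → ℝ) (x : Fin n → Alph) : ℝ := ∏ i, μ (x i)

lemma sum_prod_eq {ι : Type*} [Fintype ι] [DecidableEq ι] (G : ι → Alph → ℝ) :
    ∑ y : ι → Alph, ∏ j, G j (y j) = ∏ j, ∑ a, G j a := by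
  rw [Finset.prod_univ_sum, Fintype.piFinset_univ]

lemma wz_sum (μ : Alph → ℝ) (hs : ∑ a, μ a = 1) : ∑ x : Fin n → Alph, wz μ x = 1 := by
  unfold wz; rw [sum_prod_eq (fun _ => μ)]; simp [hs]

/-- restricted sum with coordinate i pinned to b -/
def nres (c : Fin n → Alph → ℝ) (i : Fin n) (b : Alph) (H : (Fin n → Alph) → ℝ) : ℝ :=
  ∑ y : Fin n → Alph, ((if y i = b then (1:ℝ) else 0) * ∏ j ∈ univ.erase i, c j (y j)) * H y

lemma collapse (c : Fin n → Alph → ℝ) (H : (Fin n → Alph) → ℝ) (i : Fin n) :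
    ∑ y : Fin n → Alph, (∏ j, c j (y j)) * H y = ∑ b, c i b * nres c i b H := by
  unfold nres
  simp only [Finset.mul_sum]
  rw [Finset.sum_comm]
  refine Finset.sum_congr rfl fun y _ => ?_
  have h1 : ∀ b, c i b * (((if y i = b then (1:ℝ) else 0) * ∏ j ∈ univ.erase i, c j (y j)) * H y)
      = if y i = b then c i b * ((∏ j ∈ univ.erase i, c j (y j)) * H y) else 0 := by
    intro b; by_cases h : y i = b <;> simp [h]
  rw [Finset.sum_congr rfl (fun b _ => h1 b)]
  rw [Finset.sum_ite_eq univ (y i) (fun b => c i b * ((∏ j ∈ univ.erase i, c j (y j)) * H y))]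
  rw [if_pos (Finset.mem_univ _), ← mul_assoc,
    Finset.mul_prod_erase univ (fun j => c j (y j)) (Finset.mem_univ i)]

lemma nres_swap (c : Fin n → Alph → ℝ) (H : (Fin n → Alph) → ℝ) (i : Fin n) (a b : Alph) :
    nres c i b (fun y => H (Function.update y i a)) = nres c i a H := by
  unfold nres
  have hinv : Function.Involutive (fun y : Fin n → Alph => Function.update y i (Equiv.swap a b (y i))) := by
    intro y; funext j
    by_cases hj : j = i
    · subst hj; simp [Function.update_self, Function.update_idem]
    · simp [Function.update_of_ne hj]
  rw [← hinv.bijective.sum_comp (fun y =>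
    ((if y i = b then (1:ℝ) else 0) * ∏ j ∈ univ.erase i, c j (y j)) * H (Function.update y i a))]
  refine Finset.sum_congr rfl fun y _ => ?_
  have h1 : (Function.update y i (Equiv.swap a b (y i))) i = Equiv.swap a b (y i) :=
    Function.update_self _ _ _
  have h2 : ∀ j ∈ univ.erase i, c j ((Function.update y i (Equiv.swap a b (y i))) j) = c j (y j) := by
    intro j hj; rw [Function.update_of_ne (Finset.ne_of_mem_erase hj)]
  have h3 : Function.update (Function.update y i (Equiv.swap a b (y i))) i a
      = Function.update y i a := Function.update_idem _ _ _
  rw [h1, Finset.prod_congr rfl h2, h3]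
  have h4 : (Equiv.swap a b (y i) = b) ↔ (y i = a) := by
    constructor
    · intro h; have := congrArg (Equiv.swap a b) h
      rwa [Equiv.swap_apply_self, Equiv.swap_apply_right] at this
    · intro h; rw [h, Equiv.swap_apply_left]
  by_cases h : y i = a
  · rw [if_pos (h4.mpr h), if_pos h]
    congr 2
    rw [← h, Function.update_eq_self]
  · rw [if_neg (fun hb => h (h4.mp hb)), if_neg h]
    ring

lemma nres_ign (c : Fin n → Alph → ℝ) (H : (Fin n → Alph) → ℝ) (i : Fin n)
    (hH : ∀ y b, H (Function.update y i b) = H y) (a b : Alph) :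
    nres c i b H = nres c i a H := by
  have := nres_swap c H i a b
  simp only [hH] at this
  exact this

lemma nres_const (c : Fin n → Alph → ℝ) (i : Fin n) (b : Alph) :
    nres c i b (fun _ => 1) = ∏ j ∈ univ.erase i, ∑ a, c j a := by
  classical
  set c' : Fin n → Alph → ℝ := fun j => if j = i then (fun x => if x = b then (1:ℝ) else 0) else c j
    with hc'
  have hci : c' i = fun x => if x = b then (1:ℝ) else 0 := by simp [hc']
  have hcj : ∀ j, j ≠ i → c' j = c j := by intro j hj; simp [hc', hj]
  have key : ∑ y : Fin n → Alph, ∏ j, c' j (y j) = ∏ j, ∑ a, c' j a := sum_prod_eq c'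
  have lhs : nres c i b (fun _ => 1) = ∑ y : Fin n → Alph, ∏ j, c' j (y j) := by
    unfold nres
    refine Finset.sum_congr rfl fun y _ => ?_
    rw [mul_one, ← Finset.mul_prod_erase univ (fun j => c' j (y j)) (Finset.mem_univ i), hci]
    congr 1
    refine Finset.prod_congr rfl fun j hj => ?_
    rw [hcj j (Finset.ne_of_mem_erase hj)]
  have rhs : ∏ j, ∑ a, c' j a = ∏ j ∈ univ.erase i, ∑ a, c j a := by
    rw [← Finset.mul_prod_erase univ (fun j => ∑ a, c' j a) (Finset.mem_univ i), hci]
    have : (∑ a, if a = b then (1:ℝ) else 0) = 1 := by simp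
    rw [this, one_mul]
    refine Finset.prod_congr rfl fun j hj => ?_
    rw [hcj j (Finset.ne_of_mem_erase hj)]
  rw [lhs, key, rhs]


set_option linter.unusedSectionVars false
set_option maxHeartbeats 4000000

variable {Alph : Type*} [Fintype Alph] [DecidableEq Alph] {n : ℕ}

lemma nres_congr (c c' : Fin n → Alph → ℝ) (i : Fin n) (b : Alph) (H : (Fin n → Alph) → ℝ)
    (h : ∀ j, j ≠ i → ∀ a, c j a = c' j a) : nres c i b H = nres c' i b H := by
  unfold nres
  refine Finset.sum_congr rfl fun y _ => ?_
  congr 1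
  congr 1
  exact Finset.prod_congr rfl fun j hj => h j (Finset.ne_of_mem_erase hj) (y j)

/-- resampling identity -/
lemma resample (μ : Alph → ℝ) (hs : ∑ a, μ a = 1) (F : (Fin n → Alph) → ℝ) (i : Fin n) :
    ∑ x : Fin n → Alph, wz μ x * F x
      = ∑ x : Fin n → Alph, wz μ x * ∑ a, μ a * F (Function.update x i a) := by
  have lhs : ∑ x : Fin n → Alph, wz μ x * F x = ∑ b, μ b * nres (fun _ => μ) i b F :=
    collapse (fun _ => μ) F i
  have rhs : ∀ a, ∑ x : Fin n → Alph, wz μ x * F (Function.update x i a)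
      = nres (fun _ => μ) i a F := by
    intro a
    show ∑ x : Fin n → Alph, (∏ j, μ (x j)) * F (Function.update x i a) = _
    rw [collapse (fun _ => μ) (fun x => F (Function.update x i a)) i]
    have : ∀ b, nres (fun _ => μ) i b (fun x => F (Function.update x i a))
        = nres (fun _ => μ) i a F := fun b => nres_swap (fun _ => μ) F i a b
    simp only [this, ← Finset.sum_mul, hs, one_mul]
  calc ∑ x : Fin n → Alph, wz μ x * F x = ∑ b, μ b * nres (fun _ => μ) i b F := lhs
    _ = ∑ a, μ a * ∑ x : Fin n → Alph, wz μ x * F (Function.update x i a) := by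
        refine Finset.sum_congr rfl fun b _ => ?_
        rw [rhs b]
    _ = ∑ x : Fin n → Alph, wz μ x * ∑ a, μ a * F (Function.update x i a) := by
        simp only [Finset.mul_sum]
        rw [Finset.sum_comm]
        exact Finset.sum_congr rfl fun x _ => Finset.sum_congr rfl fun a _ => by ring

/-- marginal identity -/
lemma marg (μ : Alph → ℝ) (hs : ∑ a, μ a = 1) (F : Alph → ℝ) (i : Fin n) :
    ∑ x : Fin n → Alph, wz μ x * F (x i) = ∑ a, μ a * F a := by
  show ∑ x : Fin n → Alph, (∏ j, μ (x j)) * F (x i) = _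
  rw [collapse (fun _ => μ) (fun x => F (x i)) i]
  refine Finset.sum_congr rfl fun b _ => ?_
  congr 1
  have h1 : nres (fun _ => μ) i b (fun x => F (x i)) = F b * nres (fun _ => μ) i b (fun _ => 1) := by
    unfold nres
    rw [Finset.mul_sum]
    refine Finset.sum_congr rfl fun y _ => ?_
    by_cases h : y i = b <;> simp [h, mul_comm]
  rw [h1, nres_const]
  simp [hs]

/-- the kernel of condExpOn, coordinate-wise -/
def cker (μ : Alph → ℝ) (T : Finset (Fin n)) (x : Fin n → Alph) : Fin n → Alph → ℝ :=
  fun j b => if j ∈ T then (if b = x j then (1:ℝ) else 0) else μ b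

lemma condExpOn_eq (μ : Alph → ℝ) (T : Finset (Fin n)) (g : (Fin n → Alph) → ℝ) (x : Fin n → Alph) :
    condExpOn μ T g x = ∑ y : Fin n → Alph, (∏ j, cker μ T x j (y j)) * g y := rfl

lemma condExpOn_univ (μ : Alph → ℝ) (g : (Fin n → Alph) → ℝ) :
    condExpOn (n := n) μ univ g = g := by
  funext x
  rw [condExpOn_eq]
  have h1 : ∀ y : Fin n → Alph, (∏ j, cker μ univ x j (y j)) * g y
      = if y = x then g y else 0 := by
    intro y
    have h2 : (∏ j, cker μ univ x j (y j)) = ∏ j, (if y j = x j then (1:ℝ) else 0) :=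
      Finset.prod_congr rfl fun j _ => by simp [cker]
    have h3 : (∀ j ∈ (univ : Finset (Fin n)), y j = x j) ↔ y = x := by
      constructor
      · intro hc; exact funext fun j => hc j (Finset.mem_univ j)
      · intro hc j _; rw [hc]
    rw [h2, Finset.prod_boole]
    simp only [h3]
    by_cases h : y = x <;> simp [h]
  rw [Finset.sum_congr rfl fun y _ => h1 y, Finset.sum_ite_eq' univ x g]
  simp

/-- composition of conditional expectations -/
lemma condExpOn_comp (μ : Alph → ℝ) (hs : ∑ a, μ a = 1) (T T' : Finset (Fin n))
    (g : (Fin n → Alph) → ℝ) :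
    condExpOn μ T (condExpOn μ T' g) = condExpOn μ (T ∩ T') g := by
  funext x
  rw [condExpOn_eq]
  have expand : ∀ y : Fin n → Alph, (∏ j, cker μ T x j (y j)) * condExpOn μ T' g y
      = ∑ z : Fin n → Alph, (∏ j, cker μ T x j (y j) * cker μ T' y j (z j)) * g z := by
    intro y
    rw [condExpOn_eq, Finset.mul_sum]
    refine Finset.sum_congr rfl fun z _ => ?_
    rw [Finset.prod_mul_distrib]
    ring
  rw [Finset.sum_congr rfl fun y _ => expand y, Finset.sum_comm]
  rw [condExpOn_eq]
  refine Finset.sum_congr rfl fun z _ => ?_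
  rw [← Finset.sum_mul]
  congr 1
  have swap : ∑ y : Fin n → Alph, ∏ j, cker μ T x j (y j) * cker μ T' y j (z j)
      = ∏ j, ∑ b, cker μ T x j b * (if j ∈ T' then (if z j = b then (1:ℝ) else 0) else μ (z j)) := by
    rw [← sum_prod_eq]
    exact Finset.sum_congr rfl fun y _ => Finset.prod_congr rfl fun j _ => rfl
  rw [swap]
  refine Finset.prod_congr rfl fun j _ => ?_
  by_cases hT : j ∈ T <;> by_cases hT' : j ∈ T'
  · have : ∀ b, cker μ T x j b * (if j ∈ T' then (if z j = b then (1:ℝ) else 0) else μ (z j))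
        = if b = x j then (if z j = b then (1:ℝ) else 0) else 0 := by
      intro b; by_cases h : b = x j <;> simp [cker, hT, hT', h]
    rw [Finset.sum_congr rfl fun b _ => this b, Finset.sum_ite_eq' univ (x j)
      (fun b => if z j = b then (1:ℝ) else 0)]
    simp [cker, hT, hT', Finset.mem_inter]
  · have : ∀ b, cker μ T x j b * (if j ∈ T' then (if z j = b then (1:ℝ) else 0) else μ (z j))
        = if b = x j then μ (z j) else 0 := by
      intro b; by_cases h : b = x j <;> simp [cker, hT, hT', h]
    rw [Finset.sum_congr rfl fun b _ => this b, Finset.sum_ite_eq' univ (x j) (fun _ => μ (z j))]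
    simp [cker, hT, hT', Finset.mem_inter]
  · have : ∀ b, cker μ T x j b * (if j ∈ T' then (if z j = b then (1:ℝ) else 0) else μ (z j))
        = if z j = b then μ b else 0 := by
      intro b; by_cases h : z j = b <;> simp [cker, hT, hT', h]
    rw [Finset.sum_congr rfl fun b _ => this b, Finset.sum_ite_eq univ (z j) μ]
    simp [cker, hT, hT', Finset.mem_inter]
  · have : ∀ b, cker μ T x j b * (if j ∈ T' then (if z j = b then (1:ℝ) else 0) else μ (z j))
        = μ b * μ (z j) := by intro b; simp [cker, hT, hT']
    rw [Finset.sum_congr rfl fun b _ => this b, ← Finset.sum_mul, hs, one_mul]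
    simp [cker, hT, hT', Finset.mem_inter]

/-- conditional expectation of an update-composed function -/
lemma condExpOn_upd (μ : Alph → ℝ) (hs : ∑ a, μ a = 1) (T : Finset (Fin n)) (i : Fin n)
    (hiT : i ∉ T) (a : Alph) (g : (Fin n → Alph) → ℝ) (x : Fin n → Alph) :
    condExpOn μ T (fun y => g (Function.update y i a)) x
      = condExpOn μ (insert i T) g (Function.update x i a) := by
  rw [condExpOn_eq, condExpOn_eq]
  rw [collapse (cker μ T x) (fun y => g (Function.update y i a)) i]
  rw [collapse (cker μ (insert i T) (Function.update x i a)) g i]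
  have hcT : ∀ b, cker μ T x i b = μ b := by intro b; simp [cker, hiT]
  have hcI : ∀ b, cker μ (insert i T) (Function.update x i a) i b
      = if b = a then (1:ℝ) else 0 := by
    intro b; simp [cker, Finset.mem_insert]
  have hagree : ∀ j, j ≠ i → ∀ b, cker μ T x j b = cker μ (insert i T) (Function.update x i a) j b := by
    intro j hj b
    simp only [cker, Finset.mem_insert]
    rw [Function.update_of_ne hj]
    by_cases hT : j ∈ T
    · simp [hT, hj]
    · simp [hT, hj]
  calc ∑ b, cker μ T x i b * nres (cker μ T x) i b (fun y => g (Function.update y i a))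
      = ∑ b, μ b * nres (cker μ T x) i a g := by
        refine Finset.sum_congr rfl fun b _ => ?_
        rw [hcT b, nres_swap]
    _ = nres (cker μ T x) i a g := by rw [← Finset.sum_mul, hs, one_mul]
    _ = nres (cker μ (insert i T) (Function.update x i a)) i a g :=
        nres_congr _ _ _ _ _ hagree
    _ = ∑ b, cker μ (insert i T) (Function.update x i a) i b *
          nres (cker μ (insert i T) (Function.update x i a)) i b g := by
        have : ∀ b, cker μ (insert i T) (Function.update x i a) i b *
            nres (cker μ (insert i T) (Function.update x i a)) i b g
            = if b = a then nres (cker μ (insert i T) (Function.update x i a)) i b g else 0 := by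
          intro b; rw [hcI b]; by_cases h : b = a <;> simp [h]
        rw [Finset.sum_congr rfl fun b _ => this b, Finset.sum_ite_eq' univ a]
        simp

/-- conditioning on an ignored coordinate does nothing -/
lemma condExpOn_ign (μ : Alph → ℝ) (hs : ∑ a, μ a = 1) (T : Finset (Fin n)) (i : Fin n)
    (hiT : i ∉ T) (h : (Fin n → Alph) → ℝ) (hH : ∀ y b, h (Function.update y i b) = h y) :
    condExpOn μ (insert i T) h = condExpOn μ T h := by
  funext x
  rw [condExpOn_eq, condExpOn_eq]
  rw [collapse (cker μ (insert i T) x) h i, collapse (cker μ T x) h i]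
  have hcT : ∀ b, cker μ T x i b = μ b := by intro b; simp [cker, hiT]
  have hcI : ∀ b, cker μ (insert i T) x i b = if b = x i then (1:ℝ) else 0 := by
    intro b; simp [cker, Finset.mem_insert]
  have hagree : ∀ j, j ≠ i → ∀ b, cker μ (insert i T) x j b = cker μ T x j b := by
    intro j hj b
    simp only [cker, Finset.mem_insert]
    by_cases hT : j ∈ T
    · simp [hT, hj]
    · simp [hT, hj]
  calc ∑ b, cker μ (insert i T) x i b * nres (cker μ (insert i T) x) i b h
      = ∑ b, (if b = x i then (1:ℝ) else 0) * nres (cker μ T x) i b h := by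
        refine Finset.sum_congr rfl fun b _ => ?_
        rw [hcI b, nres_congr _ _ _ _ _ hagree]
    _ = nres (cker μ T x) i (x i) h := by
        have : ∀ b, (if b = x i then (1:ℝ) else 0) * nres (cker μ T x) i b h
            = if b = x i then nres (cker μ T x) i b h else 0 := by
          intro b; by_cases hb : b = x i <;> simp [hb]
        rw [Finset.sum_congr rfl fun b _ => this b, Finset.sum_ite_eq' univ (x i)]
        simp
    _ = ∑ b, μ b * nres (cker μ T x) i b h := by
        have : ∀ b, nres (cker μ T x) i b h = nres (cker μ T x) i (x i) h :=
          fun b => nres_ign _ _ _ hH _ _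
        simp only [this, ← Finset.sum_mul, hs, one_mul]
    _ = ∑ b, cker μ T x i b * nres (cker μ T x) i b h :=
        Finset.sum_congr rfl fun b _ => by rw [hcT b]


/-! ### Efron–Stein component algebra -/

lemma sign_sum (T U : Finset (Fin n)) (hU : U ⊆ T) :
    ∑ S ∈ T.powerset, (if U ⊆ S then ((-1:ℝ) ^ (S.card - U.card)) else 0)
      = if U = T then 1 else 0 := by
  classical
  have h1 : ∑ S ∈ T.powerset, (if U ⊆ S then ((-1:ℝ) ^ (S.card - U.card)) else 0)
      = ∑ S ∈ T.powerset.filter (fun S => U ⊆ S), (-1:ℝ) ^ (S.card - U.card) := by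
    rw [Finset.sum_filter]
  have h2 : ∑ S ∈ T.powerset.filter (fun S => U ⊆ S), ((-1:ℝ)) ^ (S.card - U.card)
      = ∑ V ∈ (T \ U).powerset, (-1:ℝ) ^ V.card := by
    refine Finset.sum_nbij' (fun S => S \ U) (fun V => U ∪ V) ?_ ?_ ?_ ?_ ?_
    · intro S hS
      rw [Finset.mem_filter, Finset.mem_powerset] at hS
      rw [Finset.mem_powerset]
      exact Finset.sdiff_subset_sdiff hS.1 le_rfl
    · intro V hV
      rw [Finset.mem_powerset] at hV
      rw [Finset.mem_filter, Finset.mem_powerset]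
      constructor
      · exact Finset.union_subset hU (hV.trans (Finset.sdiff_subset))
      · exact Finset.subset_union_left
    · intro S hS
      rw [Finset.mem_filter] at hS
      exact Finset.union_sdiff_of_subset hS.2
    · intro V hV
      rw [Finset.mem_powerset] at hV
      apply Finset.union_sdiff_cancel_left
      exact Finset.disjoint_of_subset_right hV (Finset.disjoint_sdiff)
    · intro S hS
      rw [Finset.mem_filter] at hS
      congr 1
      exact (Finset.card_sdiff_of_subset hS.2).symm
  have h3 : ∑ V ∈ (T \ U).powerset, ((-1:ℝ)) ^ V.card = if T \ U = ∅ then 1 else 0 := by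
    have hz := Finset.sum_powerset_neg_one_pow_card (x := T \ U)
    have : ((∑ m ∈ (T \ U).powerset, (-1:ℤ) ^ m.card : ℤ) : ℝ)
        = ∑ V ∈ (T \ U).powerset, ((-1:ℝ)) ^ V.card := by push_cast; rfl
    rw [← this, hz]
    by_cases h : T \ U = ∅ <;> simp [h]
  rw [h1, h2, h3]
  by_cases h : U = T
  · subst h; simp
  · have hne : T \ U ≠ ∅ := by
      rw [Ne, Finset.sdiff_eq_empty_iff_subset]
      exact fun hTU => h (Finset.Subset.antisymm hU hTU)
    simp [h, hne]

/-- Möbius inversion: `E_T g = ∑_{S ⊆ T} g_S`. -/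
lemma mobius (μ : Alph → ℝ) (T : Finset (Fin n)) (g : (Fin n → Alph) → ℝ) (x : Fin n → Alph) :
    condExpOn μ T g x = ∑ S ∈ T.powerset, esComp μ S g x := by
  classical
  have step1 : ∀ S ∈ T.powerset, esComp μ S g x
      = ∑ U ∈ T.powerset, (if U ⊆ S then ((-1:ℝ) ^ (S.card - U.card)) * condExpOn μ U g x else 0) := by
    intro S hS
    rw [Finset.mem_powerset] at hS
    have hfil : T.powerset.filter (fun U => U ⊆ S) = S.powerset := by
      ext U
      simp only [Finset.mem_filter, Finset.mem_powerset]
      exact ⟨fun h => h.2, fun h => ⟨h.trans hS, h⟩⟩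
    rw [← Finset.sum_filter, hfil]
    rfl
  rw [Finset.sum_congr rfl step1, Finset.sum_comm]
  have step2 : ∀ U ∈ T.powerset,
      (∑ S ∈ T.powerset, if U ⊆ S then ((-1:ℝ) ^ (S.card - U.card)) * condExpOn μ U g x else 0)
      = (if U = T then 1 else 0) * condExpOn μ U g x := by
    intro U hU
    rw [Finset.mem_powerset] at hU
    rw [← sign_sum T U hU, Finset.sum_mul]
    refine Finset.sum_congr rfl fun S _ => ?_
    by_cases h : U ⊆ S <;> simp [h]
  rw [Finset.sum_congr rfl step2]
  have : ∀ U ∈ T.powerset, (if U = T then 1 else 0) * condExpOn μ U g x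
      = if U = T then condExpOn μ U g x else 0 := by
    intro U _; by_cases h : U = T <;> simp [h]
  rw [Finset.sum_congr rfl this, Finset.sum_ite_eq' T.powerset T (fun U => condExpOn μ U g x)]
  simp

/-- Efron–Stein decomposition of `g`. -/
lemma decomp (μ : Alph → ℝ) (g : (Fin n → Alph) → ℝ) (x : Fin n → Alph) :
    g x = ∑ S : Finset (Fin n), esComp μ S g x := by
  have h := mobius μ Finset.univ g x
  rw [condExpOn_univ] at h
  rw [Finset.powerset_univ] at h
  exact h

lemma wkernel_symm (μ : Alph → ℝ) (T : Finset (Fin n)) (x y : Fin n → Alph) :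
    wz μ x * (∏ j, cker μ T x j (y j)) = wz μ y * (∏ j, cker μ T y j (x j)) := by
  unfold wz
  rw [← Finset.prod_mul_distrib, ← Finset.prod_mul_distrib]
  refine Finset.prod_congr rfl fun j _ => ?_
  unfold cker
  by_cases hT : j ∈ T
  · simp only [if_pos hT]
    by_cases h : y j = x j
    · rw [h]
    · rw [if_neg h, if_neg (fun hc => h hc.symm)]; ring
  · simp only [if_neg hT]; ring

/-- self-adjointness of conditional expectation -/
lemma adjoint (μ : Alph → ℝ) (T : Finset (Fin n)) (u v : (Fin n → Alph) → ℝ) :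
    ∑ x : Fin n → Alph, wz μ x * (condExpOn μ T u x * v x)
      = ∑ x : Fin n → Alph, wz μ x * (u x * condExpOn μ T v x) := by
  have lhs : ∀ x : Fin n → Alph, wz μ x * (condExpOn μ T u x * v x)
      = ∑ y : Fin n → Alph, (wz μ x * (∏ j, cker μ T x j (y j))) * (u y * v x) := by
    intro x
    rw [condExpOn_eq, Finset.sum_mul, Finset.mul_sum]
    exact Finset.sum_congr rfl fun y _ => by ring
  have rhs : ∀ x : Fin n → Alph, wz μ x * (u x * condExpOn μ T v x)
      = ∑ y : Fin n → Alph, (wz μ x * (∏ j, cker μ T x j (y j))) * (v y * u x) := by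
    intro x
    rw [condExpOn_eq]
    simp only [Finset.mul_sum]
    exact Finset.sum_congr rfl fun y _ => by ring
  rw [Finset.sum_congr rfl fun x _ => lhs x, Finset.sum_congr rfl fun x _ => rhs x]
  rw [Finset.sum_comm]
  refine Finset.sum_congr rfl fun y _ => Finset.sum_congr rfl fun x _ => ?_
  rw [wkernel_symm]
  ring

lemma condExpOn_finsum (μ : Alph → ℝ) (T : Finset (Fin n)) {κ : Type*} (A : Finset κ)
    (F : κ → (Fin n → Alph) → ℝ) (x : Fin n → Alph) :
    condExpOn μ T (fun y => ∑ k ∈ A, F k y) x = ∑ k ∈ A, condExpOn μ T (F k) x := by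
  unfold condExpOn
  rw [Finset.sum_comm]
  refine Finset.sum_congr rfl fun y _ => ?_
  rw [Finset.mul_sum]

lemma condExpOn_smul (μ : Alph → ℝ) (T : Finset (Fin n)) (c : ℝ)
    (F : (Fin n → Alph) → ℝ) (x : Fin n → Alph) :
    condExpOn μ T (fun y => c * F y) x = c * condExpOn μ T F x := by
  unfold condExpOn
  rw [Finset.mul_sum]
  exact Finset.sum_congr rfl fun y _ => by ring

/-- `E_T f_S = f_S` when `S ⊆ T`. -/
lemma ce_fix (μ : Alph → ℝ) (hs : ∑ a, μ a = 1) (S T : Finset (Fin n)) (hST : S ⊆ T)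
    (g : (Fin n → Alph) → ℝ) (x : Fin n → Alph) :
    condExpOn μ T (esComp μ S g) x = esComp μ S g x := by
  have h0 : condExpOn μ T (esComp μ S g) x = ∑ U ∈ S.powerset,
      condExpOn μ T (fun z => ((-1:ℝ) ^ (S.card - U.card)) * condExpOn μ U g z) x :=
    condExpOn_finsum μ T S.powerset _ x
  rw [h0]
  unfold esComp
  refine Finset.sum_congr rfl fun U hU => ?_
  rw [Finset.mem_powerset] at hU
  rw [condExpOn_smul]
  congr 1
  have := congrFun (condExpOn_comp μ hs T U g) x
  rw [this]
  congr 1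
  exact Finset.inter_eq_right.mpr (hU.trans hST)

/-- `E_T f_S = 0` when `S ⊄ T`. -/
lemma ce_vanish (μ : Alph → ℝ) (hs : ∑ a, μ a = 1) (S T : Finset (Fin n)) (hST : ¬ S ⊆ T)
    (g : (Fin n → Alph) → ℝ) (x : Fin n → Alph) :
    condExpOn μ T (esComp μ S g) x = 0 := by
  obtain ⟨i, hiS, hiT⟩ := Finset.not_subset.mp hST
  have h0 : condExpOn μ T (esComp μ S g) x = ∑ U ∈ S.powerset,
      condExpOn μ T (fun z => ((-1:ℝ) ^ (S.card - U.card)) * condExpOn μ U g z) x :=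
    condExpOn_finsum μ T S.powerset _ x
  rw [h0]
  have step : ∀ U ∈ S.powerset, condExpOn μ T (fun z => ((-1:ℝ) ^ (S.card - U.card)) * condExpOn μ U g z) x
      = ((-1:ℝ) ^ (S.card - U.card)) * condExpOn μ (T ∩ U) g x := by
    intro U _
    rw [condExpOn_smul]
    congr 1
    exact congrFun (condExpOn_comp μ hs T U g) x
  rw [Finset.sum_congr rfl step]
  have hS : S = insert i (S.erase i) := (Finset.insert_erase hiS).symm
  rw [hS, Finset.sum_powerset_insert (Finset.notMem_erase i S)]
  have hcard : (insert i (S.erase i)).card = (S.erase i).card + 1 := by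
    rw [Finset.card_insert_of_notMem (Finset.notMem_erase i S)]
  have cancel : ∀ U ∈ (S.erase i).powerset,
      ((-1:ℝ) ^ ((insert i (S.erase i)).card - (insert i U).card)) * condExpOn μ (T ∩ insert i U) g x
      = -(((-1:ℝ) ^ ((insert i (S.erase i)).card - U.card)) * condExpOn μ (T ∩ U) g x) := by
    intro U hU
    rw [Finset.mem_powerset] at hU
    have hiU : i ∉ U := fun h => Finset.notMem_erase i S (hU h)
    have h1 : T ∩ insert i U = T ∩ U := Finset.inter_insert_of_notMem hiT
    have h2 : (insert i U).card = U.card + 1 := Finset.card_insert_of_notMem hiU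
    have hUcard : U.card ≤ (S.erase i).card := Finset.card_le_card hU
    have h3 : (insert i (S.erase i)).card - U.card = ((insert i (S.erase i)).card - (insert i U).card) + 1 := by
      rw [hcard, h2]; omega
    rw [h1, h3, pow_succ]
    ring
  rw [Finset.sum_congr rfl cancel, Finset.sum_neg_distrib]
  ring

/-! ### Orthogonality and Parseval -/

lemma ortho (μ : Alph → ℝ) (hs : ∑ a, μ a = 1) (S S' : Finset (Fin n)) (hne : S ≠ S')
    (g g' : (Fin n → Alph) → ℝ) :
    ∑ x : Fin n → Alph, wz μ x * (esComp μ S g x * esComp μ S' g' x) = 0 := by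
  have main : ∀ (S S' : Finset (Fin n)), ¬ S' ⊆ S → ∀ (g g' : (Fin n → Alph) → ℝ),
      ∑ x : Fin n → Alph, wz μ x * (esComp μ S g x * esComp μ S' g' x) = 0 := by
    intro S S' hsub g g'
    have h1 : ∀ x, esComp μ S g x = condExpOn μ S (esComp μ S g) x :=
      fun x => (ce_fix μ hs S S (le_refl S) g x).symm
    calc ∑ x : Fin n → Alph, wz μ x * (esComp μ S g x * esComp μ S' g' x)
        = ∑ x : Fin n → Alph, wz μ x * (condExpOn μ S (esComp μ S g) x * esComp μ S' g' x) := by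
          refine Finset.sum_congr rfl fun x _ => ?_
          rw [← h1 x]
      _ = ∑ x : Fin n → Alph, wz μ x * (esComp μ S g x * condExpOn μ S (esComp μ S' g') x) :=
          adjoint μ S (esComp μ S g) (esComp μ S' g')
      _ = 0 := by
          refine Finset.sum_eq_zero fun x _ => ?_
          rw [ce_vanish μ hs S' S hsub g' x]
          ring
  by_cases hsub : S' ⊆ S
  · have hsub2 : ¬ S ⊆ S' := fun h => hne (Finset.Subset.antisymm h hsub)
    have hm := main S' S hsub2 g' g
    rw [← hm]
    exact Finset.sum_congr rfl fun x _ => by ring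
  · exact main S S' hsub g g'

/-- Parseval identity -/
lemma parseval (μ : Alph → ℝ) (hs : ∑ a, μ a = 1) (g : (Fin n → Alph) → ℝ) :
    ∑ S : Finset (Fin n), esNormSq μ S g = ∑ x : Fin n → Alph, wz μ x * g x ^ 2 := by
  have expand : ∀ x : Fin n → Alph, wz μ x * g x ^ 2
      = ∑ S : Finset (Fin n), ∑ S' : Finset (Fin n),
          wz μ x * (esComp μ S g x * esComp μ S' g x) := by
    intro x
    rw [pow_two]
    calc wz μ x * (g x * g x)
        = wz μ x * ((∑ S : Finset (Fin n), esComp μ S g x) * (∑ S' : Finset (Fin n), esComp μ S' g x)) := by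
          rw [← decomp μ g x]
      _ = ∑ S : Finset (Fin n), ∑ S' : Finset (Fin n), wz μ x * (esComp μ S g x * esComp μ S' g x) := by
          rw [Finset.sum_mul_sum]
          rw [Finset.mul_sum]
          refine Finset.sum_congr rfl fun S _ => ?_
          rw [Finset.mul_sum]
  rw [Finset.sum_congr rfl fun x _ => expand x]
  rw [Finset.sum_comm]
  refine Finset.sum_congr rfl fun S _ => ?_
  rw [Finset.sum_comm]
  have diag : ∀ S' : Finset (Fin n),
      (∑ x : Fin n → Alph, wz μ x * (esComp μ S g x * esComp μ S' g x))
      = if S' = S then esNormSq μ S g else 0 := by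
    intro S'
    by_cases h : S' = S
    · subst h
      rw [if_pos rfl]
      unfold esNormSq wz
      exact Finset.sum_congr rfl fun x _ => by rw [pow_two]
    · rw [if_neg h]
      exact ortho μ hs S S' (fun hc => h hc.symm) g g
  rw [Finset.sum_congr rfl fun S' _ => diag S', Finset.sum_ite_eq' Finset.univ S
    (fun _ => esNormSq μ S g)]
  simp

lemma wz_nonneg (μ : Alph → ℝ) (h0 : ∀ a, 0 ≤ μ a) (x : Fin n → Alph) : 0 ≤ wz μ x :=
  Finset.prod_nonneg fun i _ => h0 (x i)

lemma esNormSq_nonneg (μ : Alph → ℝ) (h0 : ∀ a, 0 ≤ μ a) (S : Finset (Fin n))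
    (g : (Fin n → Alph) → ℝ) : 0 ≤ esNormSq μ S g :=
  Finset.sum_nonneg fun x _ => mul_nonneg (wz_nonneg μ h0 x) (sq_nonneg _)

lemma degInfES_nonneg (μ : Alph → ℝ) (h0 : ∀ a, 0 ≤ μ a) (d : ℕ) (g : (Fin n → Alph) → ℝ)
    (i : Fin n) : 0 ≤ degInfES μ d g i := by
  refine Finset.sum_nonneg fun S _ => ?_
  by_cases h : S.card ≤ d ∧ i ∈ S
  · rw [if_pos h]; exact esNormSq_nonneg μ h0 S g
  · rw [if_neg h]

/-! ### Components of functions ignoring a coordinate -/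

lemma comp_vanish (μ : Alph → ℝ) (hs : ∑ a, μ a = 1) (S : Finset (Fin n)) (i : Fin n)
    (hiS : i ∈ S) (h : (Fin n → Alph) → ℝ)
    (hH : ∀ y b, h (Function.update y i b) = h y) (x : Fin n → Alph) :
    esComp μ S h x = 0 := by
  unfold esComp
  have hS : S = insert i (S.erase i) := (Finset.insert_erase hiS).symm
  rw [hS, Finset.sum_powerset_insert (Finset.notMem_erase i S)]
  have hcard : (insert i (S.erase i)).card = (S.erase i).card + 1 :=
    Finset.card_insert_of_notMem (Finset.notMem_erase i S)
  have cancel : ∀ U ∈ (S.erase i).powerset,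
      ((-1:ℝ) ^ ((insert i (S.erase i)).card - (insert i U).card)) * condExpOn μ (insert i U) h x
      = -(((-1:ℝ) ^ ((insert i (S.erase i)).card - U.card)) * condExpOn μ U h x) := by
    intro U hU
    rw [Finset.mem_powerset] at hU
    have hiU : i ∉ U := fun hc => Finset.notMem_erase i S (hU hc)
    have h1 : condExpOn μ (insert i U) h = condExpOn μ U h := condExpOn_ign μ hs U i hiU h hH
    have h2 : (insert i U).card = U.card + 1 := Finset.card_insert_of_notMem hiU
    have hUcard : U.card ≤ (S.erase i).card := Finset.card_le_card hU
    have h3 : (insert i (S.erase i)).card - U.card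
        = ((insert i (S.erase i)).card - (insert i U).card) + 1 := by
      rw [hcard, h2]; omega
    rw [h1, h3, pow_succ]
    ring
  rw [Finset.sum_congr rfl cancel, Finset.sum_neg_distrib]
  ring

lemma esNormSq_vanish (μ : Alph → ℝ) (hs : ∑ a, μ a = 1) (S : Finset (Fin n)) (i : Fin n)
    (hiS : i ∈ S) (h : (Fin n → Alph) → ℝ)
    (hH : ∀ y b, h (Function.update y i b) = h y) :
    esNormSq μ S h = 0 := by
  unfold esNormSq
  refine Finset.sum_eq_zero fun x _ => ?_
  rw [comp_vanish μ hs S i hiS h hH x]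
  ring

lemma degInf_ignore (μ : Alph → ℝ) (hs : ∑ a, μ a = 1) (d : ℕ) (i : Fin n)
    (h : (Fin n → Alph) → ℝ) (hH : ∀ y b, h (Function.update y i b) = h y) :
    degInfES μ d h i = 0 := by
  unfold degInfES
  refine Finset.sum_eq_zero fun S _ => ?_
  by_cases hc : S.card ≤ d ∧ i ∈ S
  · rw [if_pos hc, esNormSq_vanish μ hs S i hc.2 h hH]
  · rw [if_neg hc]

/-- components of a one-coordinate restriction -/
lemma comp_upd (μ : Alph → ℝ) (hs : ∑ a, μ a = 1) (S : Finset (Fin n)) (i : Fin n)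
    (hiS : i ∉ S) (a : Alph) (g : (Fin n → Alph) → ℝ) (x : Fin n → Alph) :
    esComp μ S (fun y => g (Function.update y i a)) x
      = esComp μ S g (Function.update x i a)
        + esComp μ (insert i S) g (Function.update x i a) := by
  have lhs : esComp μ S (fun y => g (Function.update y i a)) x
      = ∑ U ∈ S.powerset, ((-1:ℝ) ^ (S.card - U.card)) *
          condExpOn μ (insert i U) g (Function.update x i a) := by
    unfold esComp
    refine Finset.sum_congr rfl fun U hU => ?_
    rw [Finset.mem_powerset] at hU
    have hiU : i ∉ U := fun hc => hiS (hU hc)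
    rw [condExpOn_upd μ hs U i hiU a g x]
  have insrt : esComp μ (insert i S) g (Function.update x i a)
      = - esComp μ S g (Function.update x i a)
        + ∑ U ∈ S.powerset, ((-1:ℝ) ^ (S.card - U.card)) *
            condExpOn μ (insert i U) g (Function.update x i a) := by
    unfold esComp
    rw [Finset.sum_powerset_insert hiS]
    have hcard : (insert i S).card = S.card + 1 := Finset.card_insert_of_notMem hiS
    have p1 : ∀ U ∈ S.powerset, ((-1:ℝ) ^ ((insert i S).card - U.card)) * condExpOn μ U g (Function.update x i a)
        = -(((-1:ℝ) ^ (S.card - U.card)) * condExpOn μ U g (Function.update x i a)) := by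
      intro U hU
      rw [Finset.mem_powerset] at hU
      have : (insert i S).card - U.card = (S.card - U.card) + 1 := by
        rw [hcard]
        have := Finset.card_le_card hU
        omega
      rw [this, pow_succ]
      ring
    have p2 : ∀ U ∈ S.powerset, ((-1:ℝ) ^ ((insert i S).card - (insert i U).card)) *
          condExpOn μ (insert i U) g (Function.update x i a)
        = ((-1:ℝ) ^ (S.card - U.card)) * condExpOn μ (insert i U) g (Function.update x i a) := by
      intro U hU
      rw [Finset.mem_powerset] at hU
      have hiU : i ∉ U := fun hc => hiS (hU hc)
      have h2 : (insert i U).card = U.card + 1 := Finset.card_insert_of_notMem hiU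
      have : (insert i S).card - (insert i U).card = S.card - U.card := by
        rw [hcard, h2]; omega
      rw [this]
    rw [Finset.sum_congr rfl p1, Finset.sum_congr rfl p2, Finset.sum_neg_distrib]
  rw [lhs, insrt]
  ring

/-- averaged norm of components of a one-coordinate restriction -/
lemma normSq_upd (μ : Alph → ℝ) (hs : ∑ a, μ a = 1) (h0 : ∀ a, 0 ≤ μ a)
    (S : Finset (Fin n)) (i : Fin n) (hiS : i ∉ S) (g : (Fin n → Alph) → ℝ) :
    ∑ a, μ a * esNormSq μ S (fun y => g (Function.update y i a))
      = esNormSq μ S g + esNormSq μ (insert i S) g := by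
  set u : (Fin n → Alph) → ℝ := esComp μ S g with hu
  set v : (Fin n → Alph) → ℝ := esComp μ (insert i S) g with hv
  have step1 : ∀ a, esNormSq μ S (fun y => g (Function.update y i a))
      = ∑ y : Fin n → Alph, wz μ y * (fun z => (u z + v z) ^ 2) (Function.update y i a) := by
    intro a
    unfold esNormSq
    refine Finset.sum_congr rfl fun y _ => ?_
    rw [comp_upd μ hs S i hiS a g y]
    rfl
  have step2 : ∑ a, μ a * ∑ y : Fin n → Alph, wz μ y * (fun z => (u z + v z) ^ 2) (Function.update y i a)
      = ∑ y : Fin n → Alph, wz μ y * (u y + v y) ^ 2 := by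
    have hres := resample μ hs (fun z => (u z + v z) ^ 2) i
    rw [hres]
    simp only [Finset.mul_sum]
    rw [Finset.sum_comm]
    exact Finset.sum_congr rfl fun a _ => Finset.sum_congr rfl fun y _ => by ring
  rw [Finset.sum_congr rfl fun a _ => by rw [step1 a], step2]
  have expand : ∀ y : Fin n → Alph, wz μ y * (u y + v y) ^ 2
      = wz μ y * u y ^ 2 + 2 * (wz μ y * (u y * v y)) + wz μ y * v y ^ 2 := by
    intro y; ring
  rw [Finset.sum_congr rfl fun y _ => expand y]
  rw [Finset.sum_add_distrib, Finset.sum_add_distrib, ← Finset.mul_sum]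
  have hSne : S ≠ insert i S := by
    intro hc
    exact hiS (hc ▸ Finset.mem_insert_self i S)
  rw [ortho μ hs S (insert i S) hSne g g]
  unfold esNormSq wz
  have l1 : ∑ x : Fin n → Alph, (∏ j, μ (x j)) * u x ^ 2
      = ∑ x : Fin n → Alph, (∏ j, μ (x j)) * esComp μ S g x ^ 2 := rfl
  have l2 : ∑ x : Fin n → Alph, (∏ j, μ (x j)) * v x ^ 2
      = ∑ x : Fin n → Alph, (∏ j, μ (x j)) * esComp μ (insert i S) g x ^ 2 := rfl
  rw [l1, l2]
  ring

lemma esNormSq_upd_mem (μ : Alph → ℝ) (hs : ∑ a, μ a = 1) (S : Finset (Fin n)) (i : Fin n)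
    (hiS : i ∈ S) (a : Alph) (g : (Fin n → Alph) → ℝ) :
    esNormSq μ S (fun y => g (Function.update y i a)) = 0 := by
  refine esNormSq_vanish μ hs S i hiS _ ?_
  intro y b
  rw [Function.update_idem]

/-! ### The potential function ψ -/

/-- weighted low-degree energy -/
def psi (μ : Alph → ℝ) (d : ℕ) (g : (Fin n → Alph) → ℝ) : ℝ :=
  ∑ S : Finset (Fin n), ((d + 1 - S.card : ℕ) : ℝ) * esNormSq μ S g

lemma psi_nonneg (μ : Alph → ℝ) (h0 : ∀ a, 0 ≤ μ a) (d : ℕ) (g : (Fin n → Alph) → ℝ) :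
    0 ≤ psi μ d g :=
  Finset.sum_nonneg fun S _ => mul_nonneg (Nat.cast_nonneg _) (esNormSq_nonneg μ h0 S g)

lemma psi_le (μ : Alph → ℝ) (hs : ∑ a, μ a = 1) (h0 : ∀ a, 0 ≤ μ a) (d : ℕ)
    (g : (Fin n → Alph) → ℝ) (hg : ∀ x, 0 ≤ g x ∧ g x ≤ 1) :
    psi μ d g ≤ (d + 1 : ℝ) := by
  have step1 : psi μ d g ≤ (d + 1 : ℝ) * ∑ S : Finset (Fin n), esNormSq μ S g := by
    rw [Finset.mul_sum]
    refine Finset.sum_le_sum fun S _ => ?_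
    refine mul_le_mul_of_nonneg_right ?_ (esNormSq_nonneg μ h0 S g)
    have : (d + 1 - S.card : ℕ) ≤ d + 1 := Nat.sub_le _ _
    calc ((d + 1 - S.card : ℕ) : ℝ) ≤ ((d + 1 : ℕ) : ℝ) := Nat.cast_le.mpr this
      _ = (d + 1 : ℝ) := by push_cast; ring
  have step2 : ∑ S : Finset (Fin n), esNormSq μ S g ≤ 1 := by
    rw [parseval μ hs g]
    calc ∑ x : Fin n → Alph, wz μ x * g x ^ 2 ≤ ∑ x : Fin n → Alph, wz μ x := by
          refine Finset.sum_le_sum fun x _ => ?_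
          have h1 : g x ^ 2 ≤ 1 := by
            have := (hg x).1; have := (hg x).2; nlinarith
          calc wz μ x * g x ^ 2 ≤ wz μ x * 1 :=
                mul_le_mul_of_nonneg_left h1 (wz_nonneg μ h0 x)
            _ = wz μ x := mul_one _
      _ = 1 := wz_sum μ hs
  calc psi μ d g ≤ (d + 1 : ℝ) * ∑ S : Finset (Fin n), esNormSq μ S g := step1
    _ ≤ (d + 1 : ℝ) * 1 := by
        refine mul_le_mul_of_nonneg_left step2 ?_
        positivity
    _ = (d + 1 : ℝ) := mul_one _

/-- THE key inequality: restricting a coordinate grows ψ by at least the degree-d influence. -/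
lemma key_ineq (μ : Alph → ℝ) (hs : ∑ a, μ a = 1) (h0 : ∀ a, 0 ≤ μ a) (d : ℕ)
    (g : (Fin n → Alph) → ℝ) (i : Fin n) :
    psi μ d g + degInfES μ d g i ≤ ∑ a, μ a * psi μ d (fun y => g (Function.update y i a)) := by
  classical
  have rhs_eq : ∑ a, μ a * psi μ d (fun y => g (Function.update y i a))
      = ∑ S : Finset (Fin n), ((d + 1 - S.card : ℕ) : ℝ) *
          (∑ a, μ a * esNormSq μ S (fun y => g (Function.update y i a))) := by
    unfold psi
    simp only [Finset.mul_sum]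
    rw [Finset.sum_comm]
    exact Finset.sum_congr rfl fun S _ => Finset.sum_congr rfl fun a _ => by ring
  have per_S : ∀ S : Finset (Fin n),
      ((d + 1 - S.card : ℕ) : ℝ) * (∑ a, μ a * esNormSq μ S (fun y => g (Function.update y i a)))
      = if i ∈ S then 0
        else ((d + 1 - S.card : ℕ) : ℝ) * (esNormSq μ S g + esNormSq μ (insert i S) g) := by
    intro S
    by_cases h : i ∈ S
    · rw [if_pos h]
      have : ∀ a, esNormSq μ S (fun y => g (Function.update y i a)) = 0 :=
        fun a => esNormSq_upd_mem μ hs S i h a g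
      simp only [this]
      simp
    · rw [if_neg h, normSq_upd μ hs h0 S i h g]
  rw [rhs_eq, Finset.sum_congr rfl fun S _ => per_S S]
  -- split RHS into the i∉S part
  rw [← Finset.sum_filter_add_sum_filter_not Finset.univ (fun S => i ∈ S)
    (fun S => if i ∈ S then (0:ℝ) else ((d + 1 - S.card : ℕ) : ℝ) * (esNormSq μ S g + esNormSq μ (insert i S) g))]
  have z1 : ∑ S ∈ Finset.univ.filter (fun S => i ∈ S),
      (if i ∈ S then (0:ℝ) else ((d + 1 - S.card : ℕ) : ℝ) * (esNormSq μ S g + esNormSq μ (insert i S) g)) = 0 := by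
    refine Finset.sum_eq_zero fun S hS => ?_
    rw [Finset.mem_filter] at hS
    rw [if_pos hS.2]
  rw [z1, zero_add]
  have z2 : ∑ S ∈ Finset.univ.filter (fun S => ¬ i ∈ S),
      (if i ∈ S then (0:ℝ) else ((d + 1 - S.card : ℕ) : ℝ) * (esNormSq μ S g + esNormSq μ (insert i S) g))
      = (∑ S ∈ Finset.univ.filter (fun S => ¬ i ∈ S), ((d + 1 - S.card : ℕ) : ℝ) * esNormSq μ S g)
        + ∑ S ∈ Finset.univ.filter (fun S => ¬ i ∈ S), ((d + 1 - S.card : ℕ) : ℝ) * esNormSq μ (insert i S) g := by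
    rw [← Finset.sum_add_distrib]
    refine Finset.sum_congr rfl fun S hS => ?_
    rw [Finset.mem_filter] at hS
    rw [if_neg hS.2]
    ring
  rw [z2]
  -- reindex the insert part over sets containing i
  have reidx : ∑ S ∈ Finset.univ.filter (fun S => ¬ i ∈ S), ((d + 1 - S.card : ℕ) : ℝ) * esNormSq μ (insert i S) g
      = ∑ R ∈ Finset.univ.filter (fun R => i ∈ R), ((d + 1 - (R.card - 1) : ℕ) : ℝ) * esNormSq μ R g := by
    refine Finset.sum_nbij' (fun S => insert i S) (fun R => R.erase i) ?_ ?_ ?_ ?_ ?_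
    · intro S hS
      rw [Finset.mem_filter] at hS
      rw [Finset.mem_filter]
      exact ⟨Finset.mem_univ _, Finset.mem_insert_self i S⟩
    · intro R hR
      rw [Finset.mem_filter]
      exact ⟨Finset.mem_univ _, Finset.notMem_erase i R⟩
    · intro S hS
      rw [Finset.mem_filter] at hS
      exact Finset.erase_insert hS.2
    · intro R hR
      rw [Finset.mem_filter] at hR
      exact Finset.insert_erase hR.2
    · intro S hS
      rw [Finset.mem_filter] at hS
      congr 2
      rw [Finset.card_insert_of_notMem hS.2]
      omega
  rw [reidx]
  -- split LHS similarly
  have lhs_psi : psi μ d g = (∑ S ∈ Finset.univ.filter (fun S => ¬ i ∈ S), ((d + 1 - S.card : ℕ) : ℝ) * esNormSq μ S g)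
      + ∑ R ∈ Finset.univ.filter (fun R => i ∈ R), ((d + 1 - R.card : ℕ) : ℝ) * esNormSq μ R g := by
    unfold psi
    rw [← Finset.sum_filter_add_sum_filter_not Finset.univ (fun S => i ∈ S)]
    ring
  have lhs_inf : degInfES μ d g i
      = ∑ R ∈ Finset.univ.filter (fun R => i ∈ R), (if R.card ≤ d then esNormSq μ R g else 0) := by
    unfold degInfES
    rw [← Finset.sum_filter_add_sum_filter_not Finset.univ (fun S => i ∈ S)
      (fun S => if S.card ≤ d ∧ i ∈ S then esNormSq μ S g else 0)]
    have za : ∑ S ∈ Finset.univ.filter (fun S => ¬ i ∈ S),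
        (if S.card ≤ d ∧ i ∈ S then esNormSq μ S g else 0) = 0 := by
      refine Finset.sum_eq_zero fun S hS => ?_
      rw [Finset.mem_filter] at hS
      rw [if_neg (fun hc => hS.2 hc.2)]
    have zb : ∀ S ∈ Finset.univ.filter (fun S => i ∈ S),
        (if S.card ≤ d ∧ i ∈ S then esNormSq μ S g else 0)
        = if S.card ≤ d then esNormSq μ S g else 0 := by
      intro S hS
      rw [Finset.mem_filter] at hS
      by_cases hc : S.card ≤ d
      · rw [if_pos ⟨hc, hS.2⟩, if_pos hc]
      · rw [if_neg (fun hx => hc hx.1), if_neg hc]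
    rw [Finset.sum_congr rfl zb, za]
    ring
  rw [lhs_psi, lhs_inf]
  have termwise : ∀ R ∈ Finset.univ.filter (fun R => i ∈ R),
      ((d + 1 - R.card : ℕ) : ℝ) * esNormSq μ R g + (if R.card ≤ d then esNormSq μ R g else 0)
      ≤ ((d + 1 - (R.card - 1) : ℕ) : ℝ) * esNormSq μ R g := by
    intro R hR
    rw [Finset.mem_filter] at hR
    have hcard : 1 ≤ R.card := Finset.card_pos.mpr ⟨i, hR.2⟩
    have he := esNormSq_nonneg μ h0 R g
    by_cases hc : R.card ≤ d
    · rw [if_pos hc]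
      have : (d + 1 - (R.card - 1) : ℕ) = (d + 1 - R.card : ℕ) + 1 := by omega
      rw [this]
      push_cast
      nlinarith
    · rw [if_neg hc, add_zero]
      refine mul_le_mul_of_nonneg_right ?_ he
      have : (d + 1 - R.card : ℕ) ≤ (d + 1 - (R.card - 1) : ℕ) := by omega
      exact_mod_cast this
  have final := Finset.sum_le_sum termwise
  rw [Finset.sum_add_distrib] at final
  linarith

lemma wz_def (μ : Alph → ℝ) (x : Fin n → Alph) : wz μ x = ∏ i, μ (x i) := rfl

attribute [irreducible] condExpOn esComp esNormSq degInfES psi wz nres cker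

/-! ### Restriction to a set of coordinates and the set-level potential -/

/-- substitute the coordinates in `J` from `x` -/
def resF (J : Finset (Fin n)) (x y : Fin n → Alph) : Fin n → Alph :=
  fun i => if i ∈ J then x i else y i

lemma resF_empty (x y : Fin n → Alph) : resF (∅ : Finset (Fin n)) x y = y := by
  funext i; simp [resF]

lemma resF_insert (J : Finset (Fin n)) (i : Fin n) (x y : Fin n → Alph) :
    resF (insert i J) x y = resF J x (Function.update y i (x i)) := by
  funext j
  by_cases hj : j = i
  · subst hj
    by_cases hJ : j ∈ J <;> simp [resF, hJ, Function.update_self]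
  · by_cases hJ : j ∈ J <;> simp [resF, hJ, hj, Function.update_of_ne hj]

lemma resF_update_left (J : Finset (Fin n)) (i : Fin n) (hiJ : i ∉ J) (a : Alph)
    (x y : Fin n → Alph) : resF J (Function.update x i a) y = resF J x y := by
  funext j
  by_cases hJ : j ∈ J
  · have : j ≠ i := fun hc => hiJ (hc ▸ hJ)
    simp [resF, hJ, Function.update_of_ne this]
  · simp [resF, hJ]

lemma resF_union (J K : Finset (Fin n)) (x y : Fin n → Alph) :
    resF J x (resF K x y) = resF (J ∪ K) x y := by
  funext j
  by_cases hJ : j ∈ J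
  · simp [resF, hJ, Finset.mem_union, hJ]
  · by_cases hK : j ∈ K <;> simp [resF, hJ, hK, Finset.mem_union]

lemma resF_self_right (K : Finset (Fin n)) (x z y : Fin n → Alph) :
    resF K (resF K x z) y = resF K x y := by
  funext j
  by_cases hK : j ∈ K <;> simp [resF, hK]

lemma resF_eq_of_agree (K : Finset (Fin n)) (z z' : Fin n → Alph)
    (h : ∀ i ∈ K, z i = z' i) (y : Fin n → Alph) : resF K z y = resF K z' y := by
  funext j
  by_cases hK : j ∈ K <;> simp [resF, hK]
  exact h j hK

/-- the set-level potential -/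
def Phi (μ : Alph → ℝ) (d : ℕ) (f : (Fin n → Alph) → ℝ) (J : Finset (Fin n)) : ℝ :=
  ∑ x : Fin n → Alph, wz μ x * psi μ d (fun y => f (resF J x y))

lemma Phi_empty (μ : Alph → ℝ) (hs : ∑ a, μ a = 1) (d : ℕ) (f : (Fin n → Alph) → ℝ) :
    Phi μ d f ∅ = psi μ d f := by
  unfold Phi
  have : ∀ x : Fin n → Alph, psi μ d (fun y => f (resF (∅ : Finset (Fin n)) x y)) = psi μ d f := by
    intro x
    have he : (fun y => f (resF (∅ : Finset (Fin n)) x y)) = f := by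
      funext y; rw [resF_empty]
    rw [he]
  rw [Finset.sum_congr rfl fun x _ => by rw [this x]]
  rw [← Finset.sum_mul, wz_sum μ hs, one_mul]

/-- one-step expansion of the potential -/
lemma Phi_insert (μ : Alph → ℝ) (hs : ∑ a, μ a = 1) (d : ℕ) (f : (Fin n → Alph) → ℝ)
    (J : Finset (Fin n)) (i : Fin n) (hiJ : i ∉ J) :
    Phi μ d f (insert i J) = ∑ x : Fin n → Alph, wz μ x *
      ∑ a, μ a * psi μ d (fun y => f (resF J x (Function.update y i a))) := by
  unfold Phi
  set G : (Fin n → Alph) → ℝ :=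
    fun x' => psi μ d (fun y => f (resF J x' (Function.update y i (x' i)))) with hG
  have hGx : ∀ x : Fin n → Alph,
      G x = psi μ d (fun y => f (resF J x (Function.update y i (x i)))) := fun x => rfl
  calc ∑ x : Fin n → Alph, wz μ x * psi μ d (fun y => f (resF (insert i J) x y))
      = ∑ x : Fin n → Alph, wz μ x * G x := by
        refine Finset.sum_congr rfl fun x _ => ?_
        rw [hGx x]
        have he : (fun y => f (resF (insert i J) x y))
            = (fun y => f (resF J x (Function.update y i (x i)))) := by
          funext y; rw [resF_insert]
        rw [he]
    _ = ∑ x : Fin n → Alph, wz μ x * ∑ a, μ a * G (Function.update x i a) :=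
        resample μ hs G i
    _ = ∑ x : Fin n → Alph, wz μ x * ∑ a, μ a * psi μ d (fun y => f (resF J x (Function.update y i a))) := by
        refine Finset.sum_congr rfl fun x _ => ?_
        congr 1
        refine Finset.sum_congr rfl fun a _ => ?_
        congr 1
        rw [hGx (Function.update x i a)]
        have he : (fun y => f (resF J (Function.update x i a)
              (Function.update y i ((Function.update x i a) i))))
            = (fun y => f (resF J x (Function.update y i a))) := by
          funext y
          rw [Function.update_self, resF_update_left J i hiJ]
        rw [he]

/-- one-step lower bound for the potential -/
lemma Phi_step (μ : Alph → ℝ) (hs : ∑ a, μ a = 1) (h0 : ∀ a, 0 ≤ μ a) (d : ℕ)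
    (f : (Fin n → Alph) → ℝ) (J : Finset (Fin n)) (i : Fin n) (hiJ : i ∉ J) :
    ∑ x : Fin n → Alph, wz μ x * (psi μ d (fun y => f (resF J x y))
        + degInfES μ d (fun y => f (resF J x y)) i)
      ≤ Phi μ d f (insert i J) := by
  rw [Phi_insert μ hs d f J i hiJ]
  refine Finset.sum_le_sum fun x _ => ?_
  refine mul_le_mul_of_nonneg_left ?_ (wz_nonneg μ h0 x)
  exact key_ineq μ hs h0 d (fun y => f (resF J x y)) i

lemma Phi_mono_insert (μ : Alph → ℝ) (hs : ∑ a, μ a = 1) (h0 : ∀ a, 0 ≤ μ a) (d : ℕ)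
    (f : (Fin n → Alph) → ℝ) (J : Finset (Fin n)) (i : Fin n) :
    Phi μ d f J ≤ Phi μ d f (insert i J) := by
  by_cases hiJ : i ∈ J
  · rw [Finset.insert_eq_self.mpr hiJ]
  · refine le_trans ?_ (Phi_step μ hs h0 d f J i hiJ)
    unfold Phi
    refine Finset.sum_le_sum fun x _ => ?_
    refine mul_le_mul_of_nonneg_left ?_ (wz_nonneg μ h0 x)
    have := degInfES_nonneg μ h0 d (fun y => f (resF J x y)) i
    linarith

lemma Phi_mono (μ : Alph → ℝ) (hs : ∑ a, μ a = 1) (h0 : ∀ a, 0 ≤ μ a) (d : ℕ)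
    (f : (Fin n → Alph) → ℝ) (J J' : Finset (Fin n)) (hJJ : J ⊆ J') :
    Phi μ d f J ≤ Phi μ d f J' := by
  classical
  have main : ∀ D : Finset (Fin n), Phi μ d f J ≤ Phi μ d f (J ∪ D) := by
    intro D
    induction D using Finset.induction_on with
    | empty => rw [Finset.union_empty]
    | @insert k D' hk ih =>
        calc Phi μ d f J ≤ Phi μ d f (J ∪ D') := ih
          _ ≤ Phi μ d f (insert k (J ∪ D')) := Phi_mono_insert μ hs h0 d f (J ∪ D') k
          _ = Phi μ d f (J ∪ insert k D') := by rw [Finset.union_insert]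
  have := main (J' \ J)
  rwa [Finset.union_sdiff_of_subset hJJ] at this

lemma Phi_le (μ : Alph → ℝ) (hs : ∑ a, μ a = 1) (h0 : ∀ a, 0 ≤ μ a) (d : ℕ)
    (f : (Fin n → Alph) → ℝ) (hf : ∀ x, 0 ≤ f x ∧ f x ≤ 1) (J : Finset (Fin n)) :
    Phi μ d f J ≤ (d + 1 : ℝ) := by
  unfold Phi
  calc ∑ x : Fin n → Alph, wz μ x * psi μ d (fun y => f (resF J x y))
      ≤ ∑ x : Fin n → Alph, wz μ x * (d + 1 : ℝ) := by
        refine Finset.sum_le_sum fun x _ => ?_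
        refine mul_le_mul_of_nonneg_left ?_ (wz_nonneg μ h0 x)
        exact psi_le μ hs h0 d _ (fun y => hf (resF J x y))
    _ = (d + 1 : ℝ) := by rw [← Finset.sum_mul, wz_sum μ hs, one_mul]

lemma Phi_nonneg (μ : Alph → ℝ) (h0 : ∀ a, 0 ≤ μ a) (d : ℕ)
    (f : (Fin n → Alph) → ℝ) (J : Finset (Fin n)) :
    0 ≤ Phi μ d f J :=
  Finset.sum_nonneg fun x _ => mul_nonneg (wz_nonneg μ h0 x) (psi_nonneg μ h0 d _)

/-- the potential of a single-coordinate restriction -/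
lemma Phi_single (μ : Alph → ℝ) (hs : ∑ a, μ a = 1) (h0 : ∀ a, 0 ≤ μ a) (d : ℕ)
    (g : (Fin n → Alph) → ℝ) (i : Fin n) :
    psi μ d g + degInfES μ d g i ≤ Phi μ d g {i} := by
  have h1 : Phi μ d g {i} = ∑ x : Fin n → Alph, wz μ x *
      (fun b => psi μ d (fun y => g (Function.update y i b))) (x i) := by
    unfold Phi
    refine Finset.sum_congr rfl fun x _ => ?_
    congr 1
    congr 1
    funext y
    congr 1
    funext j
    by_cases hj : j = i
    · subst hj; simp [resF, Function.update_self]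
    · simp [resF, hj, Function.update_of_ne hj]
  rw [h1, marg μ hs (fun b => psi μ d (fun y => g (Function.update y i b))) i]
  exact key_ineq μ hs h0 d g i

/-! ### Decoupling the potential over a disjoint union -/

lemma resF_step (K L : Finset (Fin n)) (i : Fin n) (hiK : i ∈ K) (hiL : i ∉ L)
    (x z : Fin n → Alph) (a : Alph) :
    resF (K \ L) (Function.update x i a) z
      = resF (K \ insert i L) x (Function.update z i a) := by
  funext j
  by_cases hj : j = i
  · subst hj
    have h1 : j ∈ K \ L := Finset.mem_sdiff.mpr ⟨hiK, hiL⟩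
    have h2 : j ∉ K \ insert j L := fun hc =>
      (Finset.mem_sdiff.mp hc).2 (Finset.mem_insert_self j L)
    simp [resF, h1, h2, Function.update_self]
  · by_cases hK : j ∈ K \ L
    · have hK' : j ∈ K \ insert i L := by
        rw [Finset.mem_sdiff] at hK ⊢
        refine ⟨hK.1, fun hc => ?_⟩
        rcases Finset.mem_insert.mp hc with h | h
        · exact hj h
        · exact hK.2 h
      simp [resF, hK, hK', Function.update_of_ne hj]
    · have hK' : j ∉ K \ insert i L := by
        intro hc
        rw [Finset.mem_sdiff] at hc
        exact hK (Finset.mem_sdiff.mpr ⟨hc.1, fun h => hc.2 (Finset.mem_insert_of_mem h)⟩)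
      simp [resF, hK, hK', Function.update_of_ne hj]

/-- doubly-indexed interpolation between `Phi (J ∪ K)` and its decoupled form -/
def DD (μ : Alph → ℝ) (d : ℕ) (f : (Fin n → Alph) → ℝ) (J K L : Finset (Fin n)) : ℝ :=
  ∑ x : Fin n → Alph, wz μ x * ∑ z : Fin n → Alph, wz μ z *
    psi μ d (fun y => f (resF J x (resF K (resF (K \ L) x z) y)))

lemma DD_step (μ : Alph → ℝ) (hs : ∑ a, μ a = 1) (d : ℕ) (f : (Fin n → Alph) → ℝ)
    (J K L : Finset (Fin n)) (i : Fin n) (hiK : i ∈ K) (hiL : i ∉ L)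
    (hdisj : Disjoint K J) :
    DD μ d f J K L = DD μ d f J K (insert i L) := by
  have hiJ : i ∉ J := fun h => (Finset.disjoint_left.mp hdisj hiK) h
  set A : (Fin n → Alph) → ℝ := fun x' => ∑ z : Fin n → Alph, wz μ z *
    psi μ d (fun y => f (resF J x' (resF K (resF (K \ L) x' z) y))) with hA
  set B : (Fin n → Alph) → (Fin n → Alph) → ℝ := fun x' z' =>
    psi μ d (fun y => f (resF J x' (resF K (resF (K \ insert i L) x' z') y))) with hB
  have hAx : ∀ x a, A (Function.update x i a)
      = ∑ z : Fin n → Alph, wz μ z * B x (Function.update z i a) := by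
    intro x a
    rw [hA]
    refine Finset.sum_congr rfl fun z _ => ?_
    congr 1
    rw [hB]
    have he : (fun y => f (resF J (Function.update x i a)
          (resF K (resF (K \ L) (Function.update x i a) z) y)))
        = (fun y => f (resF J x (resF K (resF (K \ insert i L) x (Function.update z i a)) y))) := by
      funext y
      rw [resF_update_left J i hiJ, resF_step K L i hiK hiL]
    rw [he]
  have inner : ∀ x : Fin n → Alph, ∑ a, μ a * A (Function.update x i a)
      = ∑ z : Fin n → Alph, wz μ z * B x z := by
    intro x
    have h := resample μ hs (B x) i
    calc ∑ a, μ a * A (Function.update x i a)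
        = ∑ a, μ a * ∑ z : Fin n → Alph, wz μ z * B x (Function.update z i a) := by
          exact Finset.sum_congr rfl fun a _ => by rw [hAx x a]
      _ = ∑ z : Fin n → Alph, wz μ z * ∑ a, μ a * B x (Function.update z i a) := by
          simp only [Finset.mul_sum]
          rw [Finset.sum_comm]
          exact Finset.sum_congr rfl fun z _ => Finset.sum_congr rfl fun a _ => by ring
      _ = ∑ z : Fin n → Alph, wz μ z * B x z := h.symm
  calc DD μ d f J K L = ∑ x : Fin n → Alph, wz μ x * A x := rfl
    _ = ∑ x : Fin n → Alph, wz μ x * ∑ a, μ a * A (Function.update x i a) :=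
        resample μ hs A i
    _ = ∑ x : Fin n → Alph, wz μ x * ∑ z : Fin n → Alph, wz μ z * B x z := by
        exact Finset.sum_congr rfl fun x _ => by rw [inner x]
    _ = DD μ d f J K (insert i L) := rfl

lemma DD_empty (μ : Alph → ℝ) (hs : ∑ a, μ a = 1) (d : ℕ) (f : (Fin n → Alph) → ℝ)
    (J K : Finset (Fin n)) : DD μ d f J K ∅ = Phi μ d f (J ∪ K) := by
  unfold DD Phi
  refine Finset.sum_congr rfl fun x _ => ?_
  congr 1
  have he : ∀ z : Fin n → Alph, psi μ d (fun y => f (resF J x (resF K (resF (K \ ∅) x z) y)))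
      = psi μ d (fun y => f (resF (J ∪ K) x y)) := by
    intro z
    have : (fun y => f (resF J x (resF K (resF (K \ ∅) x z) y)))
        = (fun y => f (resF (J ∪ K) x y)) := by
      funext y
      rw [Finset.sdiff_empty, resF_self_right, resF_union]
    rw [this]
  rw [Finset.sum_congr rfl fun z _ => by rw [he z]]
  rw [← Finset.sum_mul, wz_sum μ hs, one_mul]

lemma DD_full (μ : Alph → ℝ) (d : ℕ) (f : (Fin n → Alph) → ℝ)
    (J K : Finset (Fin n)) :
    DD μ d f J K K = ∑ x : Fin n → Alph, wz μ x * Phi μ d (fun y' => f (resF J x y')) K := by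
  unfold DD Phi
  refine Finset.sum_congr rfl fun x _ => ?_
  congr 1
  refine Finset.sum_congr rfl fun z _ => ?_
  congr 1
  have : (fun y => f (resF J x (resF K (resF (K \ K) x z) y)))
      = (fun y => f (resF J x (resF K z y))) := by
    funext y
    rw [Finset.sdiff_self, resF_empty]
  rw [this]

/-- decoupling: the potential of `J ∪ K` is the leaf-average over `x ~ μ^J`
of the potential of the leaf function over `K`. -/
lemma decouple (μ : Alph → ℝ) (hs : ∑ a, μ a = 1) (d : ℕ) (f : (Fin n → Alph) → ℝ)
    (J K : Finset (Fin n)) (hdisj : Disjoint K J) :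
    Phi μ d f (J ∪ K) = ∑ x : Fin n → Alph, wz μ x * Phi μ d (fun y => f (resF J x y)) K := by
  have main : ∀ L : Finset (Fin n), L ⊆ K → DD μ d f J K L = DD μ d f J K ∅ := by
    intro L
    induction L using Finset.induction_on with
    | empty => intro _; rfl
    | @insert k L' hk ih =>
        intro hsub
        have hkK : k ∈ K := hsub (Finset.mem_insert_self k L')
        have hL'K : L' ⊆ K := (Finset.subset_insert k L').trans hsub
        rw [← DD_step μ hs d f J K L' k hkK hk hdisj]
        exact ih hL'K
  rw [← DD_empty μ hs d f J K, ← main K (le_refl K), DD_full μ d f J K]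

/-! ### Conversion between full-vector averages and subtype averages -/


lemma prod_univ_indep {ι β : Type*} [CommMonoid β] {F1 F2 : Fintype ι} (f : ι → β) :
    @Finset.prod ι β _ (@Finset.univ ι F1) f = @Finset.prod ι β _ (@Finset.univ ι F2) f := by
  rw [Subsingleton.elim F1 F2]

lemma sum_univ_indep {ι β : Type*} [AddCommMonoid β] {F1 F2 : Fintype ι} (f : ι → β) :
    @Finset.sum ι β _ (@Finset.univ ι F1) f = @Finset.sum ι β _ (@Finset.univ ι F2) f := by
  rw [Subsingleton.elim F1 F2]

lemma sumP_one (μ : Alph → ℝ) (hs : ∑ a, μ a = 1) (J : Finset (Fin n)) :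
    ∑ x' : ↥J → Alph, ∏ i, μ (x' i) = 1 := by
  rw [sum_prod_eq (fun (_ : ↥J) => μ)]
  simp [hs]

lemma conv (μ : Alph → ℝ) (hs : ∑ a, μ a = 1) (J : Finset (Fin n))
    (h : (↥J → Alph) → ℝ) :
    ∑ x : Fin n → Alph, wz μ x * h (fun i : ↥J => x (i : Fin n))
      = ∑ x' : ↥J → Alph, (∏ i, μ (x' i)) * h x' := by
  classical
  set e : (Fin n → Alph) ≃ ((↥J → Alph) × ({i : Fin n // ¬ i ∈ J} → Alph)) :=
    Equiv.piEquivPiSubtypeProd (fun i => i ∈ J) (fun _ => Alph) with he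
  have hsymm : ∀ (u : ↥J → Alph) (v : {i : Fin n // ¬ i ∈ J} → Alph) (j : Fin n),
      e.symm (u, v) j = if hj : j ∈ J then u ⟨j, hj⟩ else v ⟨j, hj⟩ := by
    intro u v j
    rfl
  have key : ∀ (u : ↥J → Alph) (v : {i : Fin n // ¬ i ∈ J} → Alph),
      wz μ (e.symm (u, v)) * h (fun i : ↥J => e.symm (u, v) (i : Fin n))
      = ((∏ i, μ (u i)) * ∏ i, μ (v i)) * h u := by
    intro u v
    have h1 : (fun i : ↥J => e.symm (u, v) (i : Fin n)) = u := by
      funext i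
      rw [hsymm u v i]
      rw [dif_pos i.2]
    have h2 : wz μ (e.symm (u, v)) = (∏ i, μ (u i)) * ∏ i, μ (v i) := by
      rw [wz_def]
      rw [← Fintype.prod_subtype_mul_prod_subtype (fun i : Fin n => i ∈ J)
        (fun j => μ (e.symm (u, v) j))]
      congr 1
      · refine Eq.trans (Finset.prod_congr rfl fun i _ => ?_) (prod_univ_indep _)
        rw [hsymm u v i, dif_pos i.2]
      · refine Eq.trans (Finset.prod_congr rfl fun i _ => ?_) (prod_univ_indep _)
        rw [hsymm u v i, dif_neg i.2]
    rw [h1, h2]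
  calc ∑ x : Fin n → Alph, wz μ x * h (fun i : ↥J => x (i : Fin n))
      = ∑ p : (↥J → Alph) × ({i : Fin n // ¬ i ∈ J} → Alph),
          wz μ (e.symm p) * h (fun i : ↥J => e.symm p (i : Fin n)) :=
        (Equiv.sum_comp e.symm (fun x => wz μ x * h (fun i : ↥J => x (i : Fin n)))).symm
    _ = ∑ u : ↥J → Alph, ∑ v : {i : Fin n // ¬ i ∈ J} → Alph,
          ((∏ i, μ (u i)) * ∏ i, μ (v i)) * h u := by
        rw [Fintype.sum_prod_type]
        exact Finset.sum_congr rfl fun u _ => Finset.sum_congr rfl fun v _ => key u v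
    _ = ∑ x' : ↥J → Alph, (∏ i, μ (x' i)) * h x' := by
        refine Finset.sum_congr rfl fun u _ => ?_
        have h1 : ∑ v : {i : Fin n // ¬ i ∈ J} → Alph, ∏ i, μ (v i) = 1 := by
          rw [sum_prod_eq (fun (_ : {i : Fin n // ¬ i ∈ J}) => μ)]
          simp [hs]
        rw [← Finset.sum_mul, ← Finset.mul_sum, h1, mul_one]

/-! ### The round lemma -/

lemma mergeJ_eq_resF (J : Finset (Fin n)) (x : Fin n → Alph) (y : Fin n → Alph) :
    mergeJ J (fun i : ↥J => x (i : Fin n)) y = resF J x y := by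
  funext j
  by_cases hj : j ∈ J <;> simp [mergeJ, resF, hj]

lemma mergeJ_ignore (J : Finset (Fin n)) (x' : ↥J → Alph) (i : Fin n) (hiJ : i ∈ J)
    (y : Fin n → Alph) (b : Alph) :
    mergeJ J x' (Function.update y i b) = mergeJ J x' y := by
  funext j
  by_cases hj : j ∈ J
  · simp [mergeJ, hj]
  · have : j ≠ i := fun hc => hj (hc ▸ hiJ)
    simp [mergeJ, hj, Function.update_of_ne this]

/-- the probability-of-regular-restriction sum appearing in the theorem -/
def GoodSum (μ : Alph → ℝ) (d : ℕ) (τ : ℝ) (f : (Fin n → Alph) → ℝ)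
    (J : Finset (Fin n)) : ℝ :=
  ∑ x : ↥J → Alph, (∏ i, μ (x i)) *
    (if IsDegRegularES μ d τ (fun y => f (mergeJ J x y)) then 1 else 0)

lemma round_lemma (μ : Alph → ℝ) (hs : ∑ a, μ a = 1) (h0 : ∀ a, 0 ≤ μ a)
    (d : ℕ) (ε τ : ℝ) (hε : 0 < ε) (hτ : 0 < τ)
    (f : (Fin n → Alph) → ℝ) (J : Finset (Fin n))
    (hbad : GoodSum μ d τ f J < 1 - ε) :
    ∃ K : Finset (Fin n), Disjoint K J ∧ K.card ≤ Fintype.card Alph ^ J.card ∧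
      Phi μ d f J + ε * τ ≤ Phi μ d f (J ∪ K) := by
  classical
  -- the bad-leaf probability exceeds ε
  set Reg : (↥J → Alph) → Prop :=
    fun x' => IsDegRegularES μ d τ (fun y => f (mergeJ J x' y)) with hReg
  have hsplit : ∀ x' : ↥J → Alph,
      (if Reg x' then (1:ℝ) else 0) + (if Reg x' then (0:ℝ) else 1) = 1 := by
    intro x'; by_cases h : Reg x' <;> simp [h]
  have hBadSum : ε < ∑ x' : ↥J → Alph, (∏ i, μ (x' i)) * (if Reg x' then (0:ℝ) else 1) := by
    have h1 : ∑ x' : ↥J → Alph, (∏ i, μ (x' i)) * (if Reg x' then (1:ℝ) else 0)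
        + ∑ x' : ↥J → Alph, (∏ i, μ (x' i)) * (if Reg x' then (0:ℝ) else 1) = 1 := by
      rw [← Finset.sum_add_distrib]
      calc ∑ x' : ↥J → Alph, ((∏ i, μ (x' i)) * (if Reg x' then (1:ℝ) else 0)
            + (∏ i, μ (x' i)) * (if Reg x' then (0:ℝ) else 1))
          = ∑ x' : ↥J → Alph, (∏ i, μ (x' i)) := by
            refine Finset.sum_congr rfl fun x' _ => ?_
            rw [← mul_add, hsplit x', mul_one]
        _ = 1 := sumP_one μ hs J
    have h2 : GoodSum μ d τ f J
        = ∑ x' : ↥J → Alph, (∏ i, μ (x' i)) * (if Reg x' then (1:ℝ) else 0) := rfl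
    rw [h2] at hbad
    linarith
  -- there is a bad leaf, hence an influential coordinate somewhere
  have hnonzero : ∃ x'₀ : ↥J → Alph, ¬ Reg x'₀ := by
    by_contra hall
    push_neg at hall
    have : ∑ x' : ↥J → Alph, (∏ i, μ (x' i)) * (if Reg x' then (0:ℝ) else 1) = 0 := by
      refine Finset.sum_eq_zero fun x' _ => ?_
      rw [if_pos (hall x')]
      ring
    rw [this] at hBadSum
    linarith
  obtain ⟨x'₀, hx'₀⟩ := hnonzero
  have hi₀ : ∃ i : Fin n, τ < degInfES μ d (fun y => f (mergeJ J x'₀ y)) i := by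
    simp only [hReg, IsDegRegularES, not_forall, not_le] at hx'₀
    exact hx'₀
  obtain ⟨i₀, _⟩ := hi₀
  -- the coordinate picker
  set pick : ((Fin n → Alph) → ℝ) → Fin n :=
    fun g => if h : ∃ i, τ < degInfES μ d g i then h.choose else i₀ with hpick
  have hpick_spec : ∀ g : (Fin n → Alph) → ℝ, (∃ i, τ < degInfES μ d g i) →
      τ < degInfES μ d g (pick g) := by
    intro g hg
    rw [hpick]
    simp only [dif_pos hg]
    exact hg.choose_spec
  have hbad_pick : ∀ x' : ↥J → Alph, ¬ Reg x' →
      (∃ i, τ < degInfES μ d (fun y => f (mergeJ J x' y)) i) := by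
    intro x' hx'
    simp only [hReg, IsDegRegularES, not_forall, not_le] at hx'
    exact hx'
  have hpick_notJ : ∀ x' : ↥J → Alph, ¬ Reg x' →
      pick (fun y => f (mergeJ J x' y)) ∉ J := by
    intro x' hx' hmem
    have hinf := hpick_spec _ (hbad_pick x' hx')
    have hzero : degInfES μ d (fun y => f (mergeJ J x' y))
        (pick (fun y => f (mergeJ J x' y))) = 0 := by
      refine degInf_ignore μ hs d _ _ ?_
      intro y b
      rw [mergeJ_ignore J x' _ hmem y b]
    rw [hzero] at hinf
    linarith
  -- the set K of picked coordinates, over bad leaves only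
  set K : Finset (Fin n) := Finset.image
    (fun x' : ↥J → Alph => pick (fun y => f (mergeJ J x' y)))
    (Finset.univ.filter (fun x' => ¬ Reg x')) with hK
  have hKJ : Disjoint K J := by
    rw [Finset.disjoint_left]
    intro i hiK hiJ
    rw [hK, Finset.mem_image] at hiK
    obtain ⟨x', hx', hpx⟩ := hiK
    rw [Finset.mem_filter] at hx'
    exact hpick_notJ x' hx'.2 (hpx ▸ hiJ)
  have hKcard : K.card ≤ Fintype.card Alph ^ J.card := by
    calc K.card ≤ (Finset.univ.filter (fun x' : ↥J → Alph => ¬ Reg x')).card :=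
          Finset.card_image_le
      _ ≤ (Finset.univ : Finset (↥J → Alph)).card := Finset.card_filter_le _ _
      _ = Fintype.card (↥J → Alph) := Finset.card_univ
      _ = Fintype.card Alph ^ Fintype.card ↥J := Fintype.card_fun
      _ = Fintype.card Alph ^ J.card := by rw [Fintype.card_coe]
  refine ⟨K, hKJ, hKcard, ?_⟩
  -- the potential gain
  have hdec := decouple μ hs d f J K hKJ
  have hleaf : ∀ x : Fin n → Alph,
      psi μ d (fun y => f (resF J x y))
        + (if Reg (fun i : ↥J => x (i : Fin n)) then (0:ℝ) else τ)
      ≤ Phi μ d (fun y => f (resF J x y)) K := by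
    intro x
    set g : (Fin n → Alph) → ℝ := fun y => f (resF J x y) with hg
    have hgm : g = fun y => f (mergeJ J (fun i : ↥J => x (i : Fin n)) y) := by
      funext y
      rw [hg, mergeJ_eq_resF]
    by_cases hr : Reg (fun i : ↥J => x (i : Fin n))
    · rw [if_pos hr, add_zero]
      calc psi μ d g = Phi μ d g ∅ := (Phi_empty μ hs d g).symm
        _ ≤ Phi μ d g K := Phi_mono μ hs h0 d g ∅ K (Finset.empty_subset K)
    · rw [if_neg hr]
      set i' : Fin n := pick (fun y => f (mergeJ J (fun i : ↥J => x (i : Fin n)) y)) with hi'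
      have hi'K : i' ∈ K := by
        rw [hK, Finset.mem_image]
        exact ⟨fun i : ↥J => x (i : Fin n), Finset.mem_filter.mpr ⟨Finset.mem_univ _, hr⟩, rfl⟩
      have hinf : τ < degInfES μ d g i' := by
        rw [hgm]
        exact hpick_spec _ (hbad_pick _ hr)
      calc psi μ d g + τ ≤ psi μ d g + degInfES μ d g i' := by linarith
        _ ≤ Phi μ d g {i'} := Phi_single μ hs h0 d g i'
        _ ≤ Phi μ d g K := Phi_mono μ hs h0 d g {i'} K (Finset.singleton_subset_iff.mpr hi'K)
  have hgain : ∑ x : Fin n → Alph, wz μ x * (psi μ d (fun y => f (resF J x y))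
        + (if Reg (fun i : ↥J => x (i : Fin n)) then (0:ℝ) else τ))
      ≤ Phi μ d f (J ∪ K) := by
    rw [hdec]
    exact Finset.sum_le_sum fun x _ =>
      mul_le_mul_of_nonneg_left (hleaf x) (wz_nonneg μ h0 x)
  have hsplit2 : ∑ x : Fin n → Alph, wz μ x * (psi μ d (fun y => f (resF J x y))
        + (if Reg (fun i : ↥J => x (i : Fin n)) then (0:ℝ) else τ))
      = Phi μ d f J + τ * ∑ x : Fin n → Alph, wz μ x *
          (if Reg (fun i : ↥J => x (i : Fin n)) then (0:ℝ) else 1) := by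
    unfold Phi
    rw [Finset.mul_sum, ← Finset.sum_add_distrib]
    refine Finset.sum_congr rfl fun x _ => ?_
    by_cases hr : Reg (fun i : ↥J => x (i : Fin n)) <;> simp [hr] <;> ring
  have hconv : ∑ x : Fin n → Alph, wz μ x *
        (if Reg (fun i : ↥J => x (i : Fin n)) then (0:ℝ) else 1)
      = ∑ x' : ↥J → Alph, (∏ i, μ (x' i)) * (if Reg x' then (0:ℝ) else 1) :=
    conv μ hs J (fun x' => if Reg x' then (0:ℝ) else 1)
  have : Phi μ d f J + ε * τ ≤ Phi μ d f J + τ * ∑ x : Fin n → Alph, wz μ x *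
      (if Reg (fun i : ↥J => x (i : Fin n)) then (0:ℝ) else 1) := by
    rw [hconv]
    nlinarith [hBadSum]
  linarith [hgain, hsplit2.symm.le, this]

end JonesAux

/-- **Jones' regularity lemma** (junta version, arbitrary alphabets, `[0,1]`-valued
functions, low-degree influences). -/
theorem jones_regularity_lemma
    (Alph : Type*) [Fintype Alph] [DecidableEq Alph] (hcard : 2 ≤ Fintype.card Alph)
    (m : ℕ) (μ : Fin m → Alph → ℝ)
    (hpos : ∀ j a, 0 < μ j a) (hsum : ∀ j, ∑ a, μ j a = 1)
    (ε τ : ℝ) (hε : 0 < ε) (hτ : 0 < τ) (d : ℕ) :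
    ∃ 𝓜 : ℕ → ℕ, ∀ (n : ℕ) (f : Fin m → (Fin n → Alph) → ℝ),
      (∀ j x, 0 ≤ f j x ∧ f j x ≤ 1) →
      ∀ J₀ : Finset (Fin n), ∃ J : Finset (Fin n), J₀ ⊆ J ∧ J.card ≤ 𝓜 J₀.card ∧
        ∀ j, 1 - ε ≤ ∑ x : ↥J → Alph, (∏ i, μ j (x i)) *
          (if IsDegRegularES (μ j) d τ (fun y => f j (mergeJ J x y)) then 1 else 0) := by
  classical
  set A := Fintype.card Alph with hA
  have hA1 : 1 ≤ A := le_trans (by norm_num) hcard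
  have hετ : 0 < ε * τ := mul_pos hε hτ
  obtain ⟨T, hT⟩ := exists_nat_gt ((m * (d + 1) : ℝ) / (ε * τ))
  have hTbig : (m * (d + 1) : ℝ) < ε * τ * T := by
    rw [div_lt_iff₀ hετ] at hT
    calc (m * (d + 1) : ℝ) < T * (ε * τ) := hT
      _ = ε * τ * T := by ring
  set sz : ℕ → ℕ → ℕ := fun t k => Nat.rec k (fun _ acc => acc + A ^ acc) t with hsz
  have hsz0 : ∀ k, sz 0 k = k := fun k => rfl
  have hszS : ∀ t k, sz (t + 1) k = sz t k + A ^ (sz t k) := fun t k => rfl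
  have hszmono : ∀ t k, sz t k ≤ sz (t + 1) k := fun t k => Nat.le_add_right _ _
  refine ⟨fun k => sz T k, ?_⟩
  intro n f hf J₀
  have h0 : ∀ j a, 0 ≤ μ j a := fun j a => (hpos j a).le
  set Φtot : Finset (Fin n) → ℝ := fun J => ∑ j, JonesAux.Phi (μ j) d (f j) J with hΦ
  have main : ∀ t : ℕ, ∃ J : Finset (Fin n), J₀ ⊆ J ∧ J.card ≤ sz t J₀.card ∧
      ((∀ j, 1 - ε ≤ JonesAux.GoodSum (μ j) d τ (f j) J) ∨ ε * τ * (t : ℝ) ≤ Φtot J) := by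
    intro t
    induction t with
    | zero =>
        refine ⟨J₀, Finset.Subset.refl _, le_of_eq (hsz0 _).symm, Or.inr ?_⟩
        have : (0:ℝ) ≤ Φtot J₀ :=
          Finset.sum_nonneg fun j _ => JonesAux.Phi_nonneg (μ j) (h0 j) d (f j) J₀
        simpa using this
    | succ t ih =>
        obtain ⟨J, hJ0, hJcard, hJ⟩ := ih
        by_cases hg : ∀ j, 1 - ε ≤ JonesAux.GoodSum (μ j) d τ (f j) J
        · exact ⟨J, hJ0, hJcard.trans (hszmono t _), Or.inl hg⟩
        · have hΦJ : ε * τ * (t : ℝ) ≤ Φtot J := hJ.resolve_left hg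
          push_neg at hg
          obtain ⟨j₀, hj₀⟩ := hg
          have hbad : JonesAux.GoodSum (μ j₀) d τ (f j₀) J < 1 - ε := hj₀
          obtain ⟨K, hdisj, hKcard, hgain⟩ := JonesAux.round_lemma (μ j₀) (hsum j₀)
            (h0 j₀) d ε τ hε hτ (f j₀) J hbad
          refine ⟨J ∪ K, hJ0.trans Finset.subset_union_left, ?_, Or.inr ?_⟩
          · calc (J ∪ K).card ≤ J.card + K.card := Finset.card_union_le _ _
              _ ≤ sz t J₀.card + A ^ J.card := add_le_add hJcard (by rw [hA]; exact hKcard)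
              _ ≤ sz t J₀.card + A ^ (sz t J₀.card) :=
                  Nat.add_le_add_left (Nat.pow_le_pow_right hA1 hJcard) _
              _ = sz (t + 1) J₀.card := (hszS t _).symm
          · have hper : ∀ j : Fin m, JonesAux.Phi (μ j) d (f j) J + (if j = j₀ then ε * τ else 0)
                ≤ JonesAux.Phi (μ j) d (f j) (J ∪ K) := by
              intro j
              by_cases hj : j = j₀
              · subst hj
                rw [if_pos rfl]
                linarith [hgain]
              · rw [if_neg hj, add_zero]
                exact JonesAux.Phi_mono (μ j) (hsum j) (h0 j) d (f j) J (J ∪ K)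
                  Finset.subset_union_left
            have hsum2 := Finset.sum_le_sum (fun j (_ : j ∈ Finset.univ) => hper j)
            rw [Finset.sum_add_distrib] at hsum2
            have hite : ∑ j : Fin m, (if j = j₀ then ε * τ else 0) = ε * τ := by
              rw [Finset.sum_ite_eq' Finset.univ j₀ (fun _ => ε * τ)]
              simp
            rw [hite] at hsum2
            have harith : ε * τ * ((t : ℝ) + 1) = ε * τ * (t : ℝ) + ε * τ := by ring
            have hcast : ((t + 1 : ℕ) : ℝ) = (t : ℝ) + 1 := by push_cast; ring
            rw [hcast, harith]
            calc ε * τ * (t : ℝ) + ε * τ ≤ Φtot J + ε * τ := by linarith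
              _ ≤ Φtot (J ∪ K) := by
                  rw [hΦ]
                  simpa using hsum2
  obtain ⟨J, hJ0, hJcard, hJ⟩ := main T
  refine ⟨J, hJ0, hJcard, ?_⟩
  rcases hJ with h | h
  · intro j
    exact h j
  · exfalso
    have hub : Φtot J ≤ (m * (d + 1) : ℝ) := by
      calc Φtot J ≤ ∑ _j : Fin m, (d + 1 : ℝ) :=
            Finset.sum_le_sum fun j _ =>
              JonesAux.Phi_le (μ j) (hsum j) (h0 j) d (f j) (hf j) J
        _ = (m * (d + 1) : ℝ) := by
            rw [Finset.sum_const, Finset.card_univ, Fintype.card_fin, nsmul_eq_mul]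
    linarith [hTbig, h, hub]
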